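/- Let P₀ = N(−μ, 1), P₁ = N(μ, 1) with y₀(x) = 1[x > −μ], y₁(x) = 1[x < μ], and let H_threshold be the class of one-sided threshold classifiers {1[x > a]} ∪ {1[x < b]} (with a, b ∈ ℝ ∪ {±∞}). Then the benefit-of-splitting under H_threshold equals exactly 1/2. -/

import Mathlib

open MeasureTheory ProbabilityTheory

/-- Group risk under ℓ₁ loss. -/
noncomputable def risk {X : Type*} [MeasurableSpace X]
    (P : Measure X) (y h : X → ℝ) : ℝ := ∫ x, |h x - y x| ∂P

/-- Benefit-of-splitting. -/
noncomputable def benefitOfSplitting {X : Type*} [MeasurableSpace X]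
    (P₀ P₁ : Measure X) (y₀ y₁ : X → ℝ) (H : Set (X → ℝ)) : ℝ :=
  sInf ((fun h => max (risk P₀ y₀ h) (risk P₁ y₁ h)) '' H)
    - max (sInf (risk P₀ y₀ '' H)) (sInf (risk P₁ y₁ '' H))

/-- One-sided threshold classifiers `1[x > a]` and `1[x < b]`,
with thresholds in `ℝ ∪ {±∞}` (so the constants 0 and 1 are included). -/
def Hthreshold : Set (ℝ → ℝ) :=
  {h | (∃ a : EReal, h = fun x : ℝ => if a < (x : EReal) then (1:ℝ) else 0) ∨
       (∃ b : EReal, h = fun x : ℝ => if (x : EReal) < b then (1:ℝ) else 0)}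



lemma gauss_singleton (m c : ℝ) : gaussianReal m 1 {c} = 0 :=
  gaussianReal_absolutelyContinuous m one_ne_zero (measure_singleton c)

lemma gauss_map_reflect (m : ℝ) :
    (gaussianReal m 1).map (fun x => 2*m - x) = gaussianReal m 1 := by
  have h1 : (fun x : ℝ => 2*m - x) = (fun x => x + 2*m) ∘ (fun x => (-1) * x) := by
    funext x; simp; ring
  have hv : (⟨(-1:ℝ)^2, sq_nonneg _⟩ : NNReal) * 1 = 1 := by ext; norm_num
  rw [h1, ← Measure.map_map (by fun_prop) (by fun_prop), gaussianReal_map_const_mul,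
    gaussianReal_map_add_const]
  congr 1
  ring

lemma gauss_map_neg (m : ℝ) :
    (gaussianReal m 1).map (fun x => -x) = gaussianReal (-m) 1 := by
  have h1 : (fun x : ℝ => -x) = (fun x => (-1) * x) := by funext x; ring
  have hv : (⟨(-1:ℝ)^2, sq_nonneg _⟩ : NNReal) * 1 = 1 := by ext; norm_num
  rw [h1, gaussianReal_map_const_mul]
  congr 1
  ring

lemma gauss_Ioi (m : ℝ) : gaussianReal m 1 (Set.Ioi m) = 1/2 := by
  have hsym : gaussianReal m 1 (Set.Iio m) = gaussianReal m 1 (Set.Ioi m) := by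
    conv_rhs => rw [← gauss_map_reflect m]
    rw [Measure.map_apply (by fun_prop) measurableSet_Ioi]
    congr 1
    ext x
    simp only [Set.mem_preimage, Set.mem_Ioi, Set.mem_Iio]
    constructor <;> intro h <;> linarith
  have hIic : gaussianReal m 1 (Set.Iic m) = gaussianReal m 1 (Set.Ioi m) := by
    rw [← Set.Iio_union_right, measure_union (by simp [Set.disjoint_left]; intro a h; exact ne_of_lt h) (measurableSet_singleton m), gauss_singleton, add_zero, hsym]
  have htot : gaussianReal m 1 (Set.Iic m) + gaussianReal m 1 (Set.Ioi m) = 1 := by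
    rw [← measure_union (by simp [Set.disjoint_left]) measurableSet_Ioi]
    simp [Set.Iic_union_Ioi]
  rw [hIic] at htot
  rw [ENNReal.eq_div_iff (by norm_num) (by norm_num), two_mul, htot]

lemma gauss_Iio (m : ℝ) : gaussianReal m 1 (Set.Iio m) = 1/2 := by
  have hsym : gaussianReal m 1 (Set.Iio m) = gaussianReal m 1 (Set.Ioi m) := by
    conv_rhs => rw [← gauss_map_reflect m]
    rw [Measure.map_apply (by fun_prop) measurableSet_Ioi]
    congr 1
    ext x
    simp only [Set.mem_preimage, Set.mem_Ioi, Set.mem_Iio]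
    constructor <;> intro h <;> linarith
  rw [hsym, gauss_Ioi]

lemma thresh_meas (a : EReal) : Measurable (fun x : ℝ => if a < (x:EReal) then (1:ℝ) else 0) := by
  exact Measurable.ite (measurable_coe_real_ereal measurableSet_Ioi) measurable_const
    measurable_const

lemma thresh_meas' (b : EReal) : Measurable (fun x : ℝ => if (x:EReal) < b then (1:ℝ) else 0) := by
  exact Measurable.ite (measurable_coe_real_ereal measurableSet_Iio) measurable_const
    measurable_const

lemma y_meas (m : ℝ) : Measurable (fun x : ℝ => if x < m then (1:ℝ) else 0) :=
  Measurable.ite measurableSet_Iio measurable_const measurable_const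

lemma y_meas' (m : ℝ) : Measurable (fun x : ℝ => if m < x then (1:ℝ) else 0) :=
  Measurable.ite measurableSet_Ioi measurable_const measurable_const

lemma abs_int {P : Measure ℝ} [IsProbabilityMeasure P] {h y : ℝ → ℝ}
    (hh : Measurable h) (hy : Measurable y)
    (hb : ∀ x, |h x - y x| ≤ 1) : Integrable (fun x => |h x - y x|) P := by
  refine ⟨((hh.sub hy).abs).aestronglyMeasurable, ?_⟩
  refine HasFiniteIntegral.mono' (g := fun _ => (1:ℝ)) (integrable_const 1).2 ?_
  filter_upwards with x
  simpa using hb x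

lemma core (m : ℝ) (a : EReal) :
    (1:ℝ)/2 ≤ ∫ x, |(if a < (x:EReal) then (1:ℝ) else 0) - (if x < m then 1 else 0)|
      ∂(gaussianReal m 1) := by
  set f : ℝ → ℝ := fun x => |(if a < (x:EReal) then (1:ℝ) else 0) - (if x < m then 1 else 0)|
    with hf_def
  have hf_meas : Measurable f := ((thresh_meas a).sub (y_meas m)).abs
  have hbd : ∀ x : ℝ, |(if a < (x:EReal) then (1:ℝ) else 0) - (if x < m then 1 else 0)| ≤ 1 := by
    intro x; split_ifs <;> norm_num
  have hf_int : Integrable f (gaussianReal m 1) := abs_int (thresh_meas a) (y_meas m) hbd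
  have hg_meas : Measurable (fun x : ℝ => 2*m - x) := by fun_prop
  have h2 : ∫ x, f (2*m - x) ∂(gaussianReal m 1) = ∫ x, f x ∂(gaussianReal m 1) := by
    rw [← integral_map hg_meas.aemeasurable hf_meas.aestronglyMeasurable, gauss_map_reflect]
  have hfg_int : Integrable (fun x => f (2*m - x)) (gaussianReal m 1) := by
    rw [← gauss_map_reflect m] at hf_int
    exact (integrable_map_measure hf_meas.aestronglyMeasurable hg_meas.aemeasurable).mp hf_int
  have hpt : ∀ x : ℝ, x ≠ m → 1 ≤ f x + f (2*m - x) := by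
    intro x hx
    simp only [hf_def]
    rcases lt_trichotomy x m with h | h | h
    · have h1 : ¬ (2*m - x < m) := by linarith
      by_cases hax : a < (x : EReal)
      · have : a < ((2*m - x : ℝ) : EReal) := lt_trans hax (by exact_mod_cast (by linarith : x < 2*m - x))
        push_cast at this
        simp [hax, h, this, h1]
      · simp [hax, h, h1]
    · exact absurd h hx
    · have h1 : ¬ (x < m) := by linarith
      by_cases hax : a < (x : EReal)
      · simp [hax, h, h1]
      · have : ¬ a < ((2*m - x : ℝ) : EReal) := by
          push_neg at hax ⊢
          exact le_trans (by exact_mod_cast (by linarith : 2*m - x ≤ x)) hax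
        push_cast at this
        simp [hax, this, h1, show 2*m - x < m by linarith]
  have hae : (fun _ : ℝ => (1:ℝ)) ≤ᵐ[gaussianReal m 1] fun x => f x + f (2*m - x) := by
    filter_upwards [measure_eq_zero_iff_ae_notMem.mp (gauss_singleton m m)] with x hx
    exact hpt x hx
  have hint : (1:ℝ) ≤ ∫ x, (f x + f (2*m - x)) ∂(gaussianReal m 1) := by
    calc (1:ℝ) = ∫ _, (1:ℝ) ∂(gaussianReal m 1) := by simp
    _ ≤ _ := integral_mono_ae (integrable_const 1) (hf_int.add hfg_int) hae
  rw [integral_add hf_int hfg_int, h2] at hint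
  linarith

lemma core' (m : ℝ) (b : EReal) :
    (1:ℝ)/2 ≤ ∫ x, |(if (x:EReal) < b then (1:ℝ) else 0) - (if -m < x then 1 else 0)|
      ∂(gaussianReal (-m) 1) := by
  have hmap := gauss_map_neg m
  rw [← hmap]
  have hmeas : Measurable (fun x : ℝ =>
      |(if (x:EReal) < b then (1:ℝ) else 0) - (if -m < x then 1 else 0)|) :=
    ((thresh_meas' b).sub (y_meas' (-m))).abs
  rw [integral_map (by fun_prop) hmeas.aestronglyMeasurable]
  have heq : ∀ x : ℝ,
      |(if ((-x : ℝ):EReal) < b then (1:ℝ) else 0) - (if -m < -x then 1 else 0)|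
      = |(if -b < (x:EReal) then (1:ℝ) else 0) - (if x < m then 1 else 0)| := by
    intro x
    have h1 : (((-x : ℝ):EReal) < b) ↔ (-b < (x:EReal)) := by
      rw [EReal.coe_neg]
      exact EReal.neg_lt_comm
    have h2 : (-m < -x) ↔ (x < m) := by constructor <;> intro <;> linarith
    rw [if_congr h1 rfl rfl, if_congr h2 rfl rfl]
  calc (1:ℝ)/2 ≤ ∫ x, |(if -b < (x:EReal) then (1:ℝ) else 0) - (if x < m then 1 else 0)|
        ∂(gaussianReal m 1) := core m (-b)
    _ = _ := by
        apply integral_congr_ae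
        filter_upwards with x
        exact (heq x).symm

lemma int_Iio (m : ℝ) :
    ∫ x, (if x < m then (1:ℝ) else 0) ∂(gaussianReal m 1) = 1/2 := by
  have : (fun x : ℝ => if x < m then (1:ℝ) else 0)
      = (Set.Iio m).indicator (fun _ => (1:ℝ)) := by
    funext x; simp [Set.indicator_apply, Set.mem_Iio]
  rw [this, integral_indicator_const _ measurableSet_Iio, measureReal_def, gauss_Iio]
  norm_num

lemma int_Ioi (m : ℝ) :
    ∫ x, (if m < x then (1:ℝ) else 0) ∂(gaussianReal m 1) = 1/2 := by
  have : (fun x : ℝ => if m < x then (1:ℝ) else 0)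
      = (Set.Ioi m).indicator (fun _ => (1:ℝ)) := by
    funext x; simp [Set.indicator_apply, Set.mem_Ioi]
  rw [this, integral_indicator_const _ measurableSet_Ioi, measureReal_def, gauss_Ioi]
  norm_num

lemma risk_nonneg {X : Type*} [MeasurableSpace X] (P : Measure X) (y h : X → ℝ) :
    0 ≤ risk P y h := integral_nonneg fun x => abs_nonneg _

theorem benefitOfSplitting_threshold_eq_half (μ : ℝ) (hμ : 0 < μ) :
    benefitOfSplitting (gaussianReal (-μ) 1) (gaussianReal μ 1)
      (fun x => if -μ < x then (1:ℝ) else 0)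
      (fun x => if x < μ then (1:ℝ) else 0)
      Hthreshold = 1 / 2 := by
  set P₀ := gaussianReal (-μ) 1
  set P₁ := gaussianReal μ 1
  set y₀ : ℝ → ℝ := fun x => if -μ < x then (1:ℝ) else 0 with hy₀
  set y₁ : ℝ → ℝ := fun x => if x < μ then (1:ℝ) else 0 with hy₁
  -- the two separate infima are 0
  have h0mem : (0:ℝ) ∈ risk P₀ y₀ '' Hthreshold := by
    refine ⟨fun x : ℝ => if ((-μ:ℝ):EReal) < (x:EReal) then (1:ℝ) else 0,
      Or.inl ⟨((-μ:ℝ):EReal), rfl⟩, ?_⟩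
    have : (fun x : ℝ => if ((-μ:ℝ):EReal) < (x:EReal) then (1:ℝ) else 0) = y₀ := by
      funext x; exact if_congr EReal.coe_lt_coe_iff rfl rfl
    rw [this]
    simp [risk]
  have h1mem : (0:ℝ) ∈ risk P₁ y₁ '' Hthreshold := by
    refine ⟨fun x : ℝ => if (x:EReal) < ((μ:ℝ):EReal) then (1:ℝ) else 0,
      Or.inr ⟨((μ:ℝ):EReal), rfl⟩, ?_⟩
    have : (fun x : ℝ => if (x:EReal) < ((μ:ℝ):EReal) then (1:ℝ) else 0) = y₁ := by
      funext x; exact if_congr EReal.coe_lt_coe_iff rfl rfl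
    rw [this]
    simp [risk]
  have hInf0 : sInf (risk P₀ y₀ '' Hthreshold) = 0 := by
    refine le_antisymm (csInf_le ⟨0, ?_⟩ h0mem) (le_csInf ⟨0, h0mem⟩ ?_)
    · rintro r ⟨h, -, rfl⟩; exact risk_nonneg _ _ _
    · rintro r ⟨h, -, rfl⟩; exact risk_nonneg _ _ _
  have hInf1 : sInf (risk P₁ y₁ '' Hthreshold) = 0 := by
    refine le_antisymm (csInf_le ⟨0, ?_⟩ h1mem) (le_csInf ⟨0, h1mem⟩ ?_)
    · rintro r ⟨h, -, rfl⟩; exact risk_nonneg _ _ _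
    · rintro r ⟨h, -, rfl⟩; exact risk_nonneg _ _ _
  -- the joint infimum is 1/2
  have hzmem : ((1:ℝ)/2) ∈ (fun h => max (risk P₀ y₀ h) (risk P₁ y₁ h)) '' Hthreshold := by
    refine ⟨fun x : ℝ => if (⊤:EReal) < (x:EReal) then (1:ℝ) else 0,
      Or.inl ⟨(⊤:EReal), rfl⟩, ?_⟩
    have hz : (fun x : ℝ => if (⊤:EReal) < (x:EReal) then (1:ℝ) else 0)
        = fun _ : ℝ => (0:ℝ) := by
      funext x; simp
    rw [hz]
    have e0 : risk P₀ y₀ (fun _ => (0:ℝ)) = 1/2 := by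
      have : ∀ x : ℝ, |(0:ℝ) - y₀ x| = y₀ x := by
        intro x; simp only [hy₀]; split_ifs <;> simp
      simp only [risk, this]
      exact int_Ioi (-μ)
    have e1 : risk P₁ y₁ (fun _ => (0:ℝ)) = 1/2 := by
      have : ∀ x : ℝ, |(0:ℝ) - y₁ x| = y₁ x := by
        intro x; simp only [hy₁]; split_ifs <;> simp
      simp only [risk, this]
      exact int_Iio μ
    show max (risk P₀ y₀ (fun _ : ℝ => (0:ℝ))) (risk P₁ y₁ (fun _ : ℝ => (0:ℝ))) = 1/2
    rw [e0, e1, max_self]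
  have hInfJ : sInf ((fun h => max (risk P₀ y₀ h) (risk P₁ y₁ h)) '' Hthreshold) = 1/2 := by
    have hlb : ∀ r ∈ (fun h => max (risk P₀ y₀ h) (risk P₁ y₁ h)) '' Hthreshold,
        (1:ℝ)/2 ≤ r := by
      rintro r ⟨h, hh, rfl⟩
      rcases hh with ⟨a, rfl⟩ | ⟨b, rfl⟩
      · exact le_max_of_le_right (core μ a)
      · exact le_max_of_le_left (core' μ b)
    exact le_antisymm (csInf_le ⟨1/2, hlb⟩ hzmem) (le_csInf ⟨_, hzmem⟩ hlb)
  rw [benefitOfSplitting, hInf0, hInf1, hInfJ, max_self, sub_zero]
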